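/- In a unital category, if (f, g) is a jointly strongly epimorphic cospan over Z and (f', g') is a jointly strongly epimorphic cospan over Z', then the product cospan (f × f', g × g') over Z × Z' is jointly strongly epimorphic. -/
import Mathlib


open CategoryTheory CategoryTheory.Limits

universe w₂ w v u

namespace AlgCoh

variable {C : Type u} [Category.{v} C]

/-- A cospan `(f, g)` over `Z` is jointly strongly epimorphic: every monomorphism
into `Z` through which both legs factor is an isomorphism. -/
def JointlyStronglyEpi {X Y Z : C} (f : X ⟶ Z) (g : Y ⟶ Z) : Prop :=
  ∀ ⦃M : C⦄ (m : M ⟶ Z), Mono m → ∀ (f' : X ⟶ M) (g' : Y ⟶ M),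
    f' ≫ m = f → g' ≫ m = g → IsIso m

/-- In a unital category, the product of two jointly strongly epimorphic cospans
is jointly strongly epimorphic. -/
theorem jointlyStronglyEpi_prod_map
    [HasZeroObject C] [HasZeroMorphisms C] [HasFiniteLimits C]
    (hU : ∀ X Y : C,
      JointlyStronglyEpi (prod.lift (𝟙 X) (0 : X ⟶ Y)) (prod.lift (0 : Y ⟶ X) (𝟙 Y)))
    {A B Z A' B' Z' : C} {f : A ⟶ Z} {g : B ⟶ Z} {f' : A' ⟶ Z'} {g' : B' ⟶ Z'}
    (h : JointlyStronglyEpi f g) (h' : JointlyStronglyEpi f' g') :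
    JointlyStronglyEpi (prod.map f f') (prod.map g g') := by
  intro M m hm u v hu hv
  haveI : Mono m := hm
  -- Pullback of m along ⟨1_Z, 0⟩
  have key : ∀ (k : Z ⟶ Z ⨯ Z') (ka : A ⟶ A ⨯ A') (kb : B ⟶ B ⨯ B')
      (hka : ka ≫ prod.map f f' = f ≫ k) (hkb : kb ≫ prod.map g g' = g ≫ k),
      ∃ t : Z ⟶ M, t ≫ m = k := by
    intro k ka kb hka hkb
    haveI : Mono (pullback.snd m k) := pullback.snd_of_mono
    have hfl : (ka ≫ u) ≫ m = f ≫ k := by rw [Category.assoc, hu, hka]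
    have hgl : (kb ≫ v) ≫ m = g ≫ k := by rw [Category.assoc, hv, hkb]
    have hiso := h (pullback.snd m k) inferInstance
      (pullback.lift (ka ≫ u) f hfl) (pullback.lift (kb ≫ v) g hgl)
      (pullback.lift_snd _ _ _) (pullback.lift_snd _ _ _)
    exact ⟨inv (pullback.snd m k) ≫ pullback.fst m k, by
      rw [Category.assoc, pullback.condition, ← Category.assoc, IsIso.inv_hom_id,
        Category.id_comp]⟩
  have key' : ∀ (k : Z' ⟶ Z ⨯ Z') (ka : A' ⟶ A ⨯ A') (kb : B' ⟶ B ⨯ B')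
      (hka : ka ≫ prod.map f f' = f' ≫ k) (hkb : kb ≫ prod.map g g' = g' ≫ k),
      ∃ t : Z' ⟶ M, t ≫ m = k := by
    intro k ka kb hka hkb
    haveI : Mono (pullback.snd m k) := pullback.snd_of_mono
    have hfl : (ka ≫ u) ≫ m = f' ≫ k := by rw [Category.assoc, hu, hka]
    have hgl : (kb ≫ v) ≫ m = g' ≫ k := by rw [Category.assoc, hv, hkb]
    have hiso := h' (pullback.snd m k) inferInstance
      (pullback.lift (ka ≫ u) f' hfl) (pullback.lift (kb ≫ v) g' hgl)
      (pullback.lift_snd _ _ _) (pullback.lift_snd _ _ _)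
    exact ⟨inv (pullback.snd m k) ≫ pullback.fst m k, by
      rw [Category.assoc, pullback.condition, ← Category.assoc, IsIso.inv_hom_id,
        Category.id_comp]⟩
  obtain ⟨t1, ht1⟩ := key (prod.lift (𝟙 Z) 0) (prod.lift (𝟙 A) 0) (prod.lift (𝟙 B) 0)
    (by ext <;> simp) (by ext <;> simp)
  obtain ⟨t2, ht2⟩ := key' (prod.lift 0 (𝟙 Z')) (prod.lift 0 (𝟙 A')) (prod.lift 0 (𝟙 B'))
    (by ext <;> simp) (by ext <;> simp)
  exact hU Z Z' m hm t1 t2 ht1 ht2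

end AlgCoh
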